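/- Let M = [[λ₁, a], [0, λ₂]] with λ₁ ≠ λ₂, Re(λ₁) < 0, Re(λ₂) < 0, and a ∈ ℂ. If |a| > 2√(Re(λ₁)Re(λ₂)), then there exists t > 0 with ‖e^{Mt}‖₂ > 1. -/

import Mathlib

open scoped Matrix
open Complex Real

/-- The numerical range of a square complex matrix. -/
def numRange {N : ℕ} (M : Matrix (Fin N) (Fin N) ℂ) : Set ℂ :=
  {z | ∃ x : EuclideanSpace ℂ (Fin N), ‖x‖ = 1 ∧ star (x : Fin N → ℂ) ⬝ᵥ M.mulVec x = z}

/-- The numerical abscissa of a square complex matrix. -/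
noncomputable def numAbs {N : ℕ} (M : Matrix (Fin N) (Fin N) ℂ) : ℝ :=
  sSup {r : ℝ | ∃ x : EuclideanSpace ℂ (Fin N), ‖x‖ = 1 ∧ (star (x : Fin N → ℂ) ⬝ᵥ M.mulVec x).re = r}

/-- The spectral (operator 2-)norm of a square complex matrix. -/
noncomputable def spec2 {N : ℕ} (M : Matrix (Fin N) (Fin N) ℂ) : ℝ :=
  ‖Matrix.toEuclideanCLM (𝕜 := ℂ) M‖

/-- The squared Frobenius norm of a square complex matrix. -/
noncomputable def frobSq {N : ℕ} (M : Matrix (Fin N) (Fin N) ℂ) : ℝ :=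
  ∑ i, ∑ j, ‖M i j‖ ^ 2

open Topology Filter

set_option maxHeartbeats 2000000 in
/-- Transient growth of the matrix exponential of M = [[λ₁, a],[0, λ₂]] when
|a| > 2√(Re(λ₁)Re(λ₂)). -/
theorem stmt9 (lam1 lam2 a : ℂ) (hne : lam1 ≠ lam2)
    (h1 : lam1.re < 0) (h2 : lam2.re < 0)
    (ha : 2 * Real.sqrt (lam1.re * lam2.re) < ‖a‖) :
    ∃ t : ℝ, 0 < t ∧ 1 < spec2 (NormedSpace.exp ((t : ℂ) • !![lam1, a; 0, lam2])) := by
  letI : SeminormedRing (Matrix (Fin 2) (Fin 2) ℂ) := Matrix.linftyOpSemiNormedRing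
  letI : NormedRing (Matrix (Fin 2) (Fin 2) ℂ) := Matrix.linftyOpNormedRing
  letI : NormedAlgebra ℂ (Matrix (Fin 2) (Fin 2) ℂ) := Matrix.linftyOpNormedAlgebra
  set M : Matrix (Fin 2) (Fin 2) ℂ := !![lam1, a; 0, lam2] with hMdef
  -- derivative of exp at 0
  have hu : HasDerivAt (fun t : ℝ => NormedSpace.exp ((t:ℂ) • M)) M 0 := by
    have h0 : HasDerivAt (fun z : ℂ => NormedSpace.exp (z • M))
        (NormedSpace.exp ((0:ℂ) • M) * M) 0 := hasDerivAt_exp_smul_const M 0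
    have h1' := (h0.hasFDerivAt.restrictScalars ℝ).comp_hasDerivAt_of_eq (0:ℝ)
      (Complex.ofRealCLM.hasDerivAt (x := (0:ℝ))) (by simp)
    simp only [Function.comp, ofRealCLM_apply, Complex.ofReal_zero, zero_smul,
      NormedSpace.exp_zero, one_mul, ContinuousLinearMap.coe_restrictScalars',
      ContinuousLinearMap.smulRight_apply, ContinuousLinearMap.one_apply] at h1'
    exact h1'.congr_deriv (one_smul ℂ M)
  -- the unit vector
  set r1 := lam1.re with hr1
  set r2 := lam2.re with hr2
  have hr12 : 0 < r1 * r2 := mul_pos_of_neg_of_neg h1 h2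
  have hsq : 0 < Real.sqrt (r1 * r2) := Real.sqrt_pos.2 hr12
  have hA : (0:ℝ) < ‖a‖ := lt_trans (by positivity) ha
  have hAc : ((‖a‖ : ℝ) : ℂ) ≠ 0 := by exact_mod_cast hA.ne'
  set d : ℝ := -(r1 + r2) with hd
  have hdpos : 0 < d := by rw [hd]; linarith
  set c0 : ℝ := Real.sqrt (-r2 / d) with hc0
  set s0 : ℝ := Real.sqrt (-r1 / d) with hs0
  have hc0sq : c0 ^ 2 = -r2 / d := Real.sq_sqrt (le_of_lt (div_pos (by linarith) hdpos))
  have hs0sq : s0 ^ 2 = -r1 / d := Real.sq_sqrt (le_of_lt (div_pos (by linarith) hdpos))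
  have hc0s0 : c0 * s0 = Real.sqrt (r1 * r2) / d := by
    rw [hc0, hs0, ← Real.sqrt_mul (le_of_lt (div_pos (by linarith) hdpos))]
    rw [show -r2 / d * (-r1 / d) = (Real.sqrt (r1*r2) / d)^2 by
      rw [div_pow, Real.sq_sqrt hr12.le, div_mul_div_comm]
      congr 1
      · ring
      · rw [sq]]
    exact Real.sqrt_sq (le_of_lt (div_pos hsq hdpos))
  have hsum : c0 ^ 2 + s0 ^ 2 = 1 := by
    rw [hc0sq, hs0sq, ← add_div, show -r2 + -r1 = d by rw [hd]; ring]
    exact div_self hdpos.ne'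
  have hsumc : (c0:ℂ) ^ 2 + (s0:ℂ) ^ 2 = 1 := by exact_mod_cast congrArg (fun t:ℝ => (t:ℂ)) hsum
  have habs : (starRingEnd ℂ) a * a = ((‖a‖ : ℝ) : ℂ) ^ 2 := by
    rw [mul_comm, Complex.mul_conj, Complex.normSq_eq_norm_sq]; push_cast; ring
  set xv : Fin 2 → ℂ := ![(c0 : ℂ), (s0 : ℂ) * (starRingEnd ℂ) a / ((‖a‖ : ℝ) : ℂ)]
    with hxv
  set x : EuclideanSpace ℂ (Fin 2) := (WithLp.equiv 2 (Fin 2 → ℂ)).symm xv with hx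
  have hxx : (inner ℂ x x : ℂ) = 1 := by
    simp only [hx, PiLp.inner_apply, WithLp.equiv_symm_apply, PiLp.toLp_apply, Fin.sum_univ_two, hxv,
      RCLike.inner_apply, Matrix.cons_val_zero, Matrix.cons_val_one, Matrix.head_cons,
      map_mul, map_div₀, Complex.conj_conj, Complex.conj_ofReal]
    field_simp
    linear_combination (s0:ℂ)^2 * habs + ((‖a‖ : ℝ):ℂ)^2 * hsumc
  -- the matrix applied to x
  have hw : (Matrix.toEuclideanCLM (𝕜 := ℂ) M) x
      = (WithLp.equiv 2 (Fin 2 → ℂ)).symm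
        ![lam1 * (c0:ℂ) + a * ((s0:ℂ) * (starRingEnd ℂ) a / ((‖a‖ : ℝ):ℂ)),
          lam2 * ((s0:ℂ) * (starRingEnd ℂ) a / ((‖a‖ : ℝ):ℂ))] := by
    rw [hx, WithLp.equiv_symm_apply, Matrix.toEuclideanCLM_toLp]
    congr 1
    rw [hMdef, hxv]
    funext i
    fin_cases i <;>
      simp [Matrix.mulVec, dotProduct, Fin.sum_univ_two]
  have hxw : (inner ℂ x ((Matrix.toEuclideanCLM (𝕜 := ℂ) M) x) : ℂ).re
      = c0^2 * r1 + s0^2 * r2 + c0 * s0 * ‖a‖ := by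
    have hval : (inner ℂ x ((Matrix.toEuclideanCLM (𝕜 := ℂ) M) x) : ℂ)
        = ((c0^2 : ℝ):ℂ) * lam1 + ((s0^2 : ℝ):ℂ) * lam2 + ((c0 * s0 * ‖a‖ : ℝ):ℂ) := by
      rw [hw, hx]
      simp only [PiLp.inner_apply, WithLp.equiv_symm_apply, PiLp.toLp_apply, Fin.sum_univ_two,
        RCLike.inner_apply, hxv, Matrix.cons_val_zero, Matrix.cons_val_one, Matrix.head_cons,
        map_mul, map_div₀, Complex.conj_conj, Complex.conj_ofReal]
      field_simp
      push_cast
      linear_combination ((c0:ℂ)*(s0:ℂ)*((‖a‖ : ℝ):ℂ)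
        + (s0:ℂ)^2*lam2) * habs
    rw [hval]
    simp [Complex.add_re, Complex.re_ofReal_mul, ← Complex.ofReal_pow, hr1, hr2]
  have hPpos : 0 < c0^2 * r1 + s0^2 * r2 + c0 * s0 * ‖a‖ := by
    rw [hc0sq, hs0sq, hc0s0]
    have h2' : 2 * Real.sqrt (r1*r2) * Real.sqrt (r1*r2) < ‖a‖ * Real.sqrt (r1*r2) :=
      mul_lt_mul_of_pos_right ha hsq
    have hss : Real.sqrt (r1*r2) * Real.sqrt (r1*r2) = r1 * r2 := Real.mul_self_sqrt hr12.le
    rw [div_mul_eq_mul_div, div_mul_eq_mul_div, div_mul_eq_mul_div, ← add_div,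
      ← add_div]
    apply div_pos _ hdpos
    nlinarith
  -- the linear evaluation map
  let ℓ : Matrix (Fin 2) (Fin 2) ℂ →ₗ[ℂ] EuclideanSpace ℂ (Fin 2) :=
    { toFun := fun B => Matrix.toEuclideanCLM (𝕜 := ℂ) B x
      map_add' := fun B C => by simp [map_add]
      map_smul' := fun c B => by simp [map_smul] }
  let ℓr : Matrix (Fin 2) (Fin 2) ℂ →L[ℝ] EuclideanSpace ℂ (Fin 2) :=
    (LinearMap.toContinuousLinearMap ℓ).restrictScalars ℝ
  set v : ℝ → EuclideanSpace ℂ (Fin 2) :=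
    fun t => (Matrix.toEuclideanCLM (𝕜 := ℂ) (NormedSpace.exp ((t:ℂ) • M))) x with hvdef
  have hv : HasDerivAt v (Matrix.toEuclideanCLM (𝕜 := ℂ) M x) 0 := by
    have h := ℓr.hasFDerivAt.comp_hasDerivAt 0 hu
    exact h
  have hv0 : v 0 = x := by
    rw [hvdef]
    simp only [Complex.ofReal_zero, zero_smul, NormedSpace.exp_zero, map_one,
      ContinuousLinearMap.one_apply]
  have hder : HasDerivAt (fun t => ((inner ℂ (v t) (v t) : ℂ)).re)
      (2 * (c0^2 * r1 + s0^2 * r2 + c0 * s0 * ‖a‖)) 0 := by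
    have hi := HasDerivAt.inner ℂ hv hv
    have hre := Complex.reCLM.hasFDerivAt.comp_hasDerivAt 0 hi
    have hval2 : Complex.reCLM ((inner ℂ (v 0) (Matrix.toEuclideanCLM (𝕜 := ℂ) M x) : ℂ)
        + (inner ℂ (Matrix.toEuclideanCLM (𝕜 := ℂ) M x) (v 0) : ℂ))
        = 2 * (c0^2 * r1 + s0^2 * r2 + c0 * s0 * ‖a‖) := by
      rw [hv0]
      simp only [Complex.reCLM_apply, Complex.add_re]
      have hsym : ((inner ℂ ((Matrix.toEuclideanCLM (𝕜 := ℂ) M) x) x : ℂ)).re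
          = ((inner ℂ x ((Matrix.toEuclideanCLM (𝕜 := ℂ) M) x) : ℂ)).re := by
        rw [← inner_conj_symm x ((Matrix.toEuclideanCLM (𝕜 := ℂ) M) x)]
        exact (Complex.conj_re _).symm
      rw [hsym, hxw]; ring
    rw [hval2] at hre
    exact hre
  -- the norm of x is 1
  have hxnorm : ‖x‖ = 1 := by
    have h' : ‖x‖^2 = 1 := by
      rw [← inner_self_eq_norm_sq (𝕜 := ℂ) x]
      rw [show ((inner ℂ x x : ℂ)) = 1 from hxx]
      simp
    calc ‖x‖ = Real.sqrt (‖x‖^2) := (Real.sqrt_sq (norm_nonneg x)).symm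
    _ = 1 := by rw [h']; exact Real.sqrt_one
  -- find t with transient growth
  rw [hasDerivAt_iff_tendsto_slope] at hder
  have hlt : (0:ℝ) < 2 * (c0^2 * r1 + s0^2 * r2 + c0 * s0 * ‖a‖) := by linarith
  have hev : ∀ᶠ t in 𝓝[>] (0:ℝ),
      0 < slope (fun t => ((inner ℂ (v t) (v t) : ℂ)).re) 0 t :=
    (hder.mono_left (nhdsWithin_mono 0 (fun y hy => by
      simpa using (ne_of_gt hy)))).eventually (eventually_gt_nhds hlt)
  obtain ⟨t, hts, ht0⟩ := (hev.and self_mem_nhdsWithin).exists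
  have ht0' : (0:ℝ) < t := ht0
  refine ⟨t, ht0', ?_⟩
  have hg0 : ((inner ℂ (v 0) (v 0) : ℂ)).re = 1 := by
    rw [hv0, show ((inner ℂ x x : ℂ)) = 1 from hxx]; simp
  have hgt : 1 < ((inner ℂ (v t) (v t) : ℂ)).re := by
    rw [slope_def_field] at hts
    rw [hg0, sub_zero] at hts
    have := mul_pos hts ht0'
    rw [div_mul_cancel₀] at this
    · linarith
    · exact ht0'.ne'
  have hnv : 1 < ‖v t‖ := by
    have h2 : ((inner ℂ (v t) (v t) : ℂ)).re = ‖v t‖^2 := by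
      have h3 := inner_self_eq_norm_sq (𝕜 := ℂ) (v t)
      simpa using h3
    by_contra hcon
    push_neg at hcon
    have h5 : ‖v t‖^2 ≤ 1 := pow_le_one₀ (norm_nonneg _) hcon
    rw [← h2] at h5
    linarith
  have hle : ‖v t‖ ≤ spec2 (NormedSpace.exp ((t:ℂ) • M)) := by
    have h4 := (Matrix.toEuclideanCLM (𝕜 := ℂ) (NormedSpace.exp ((t:ℂ) • M))).le_opNorm x
    rw [hxnorm, mul_one] at h4
    exact h4
  exact lt_of_lt_of_le hnv hle
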